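/- Suppose that for each ρ ∈ (0,1], Ψ_ρ : Ω → ℂ is analytic on Ω and satisfies Ψ_ρ(z) = φ^{(ρ)}(z)/φ(z) for all z ∈ Ω ∖ (S + Λ), where φ^{(ρ)}(z) = ∑_{m∈Λ} 2^{−ρ|m|} ϕ(z − m). Then for every f ∈ L²(Ω) (with respect to planar Lebesgue measure), ∫_Ω |f(z) Ψ_ρ(z) − f(z)|² dA(z) → 0 as ρ → 0⁺. -/

import Mathlib

open Complex MeasureTheory Set Filter

noncomputable section

/-- The Gaussian integer lattice point associated to a pair of integers. -/
def latPt (p : ℤ × ℤ) : ℂ := (p.1 : ℂ) + (p.2 : ℂ) * Complex.I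

/-- The open unit square `Q = (0,1) × (0,1)` in `ℂ`. -/
def QSet : Set ℂ := {z : ℂ | z.re ∈ Set.Ioo (0:ℝ) 1 ∧ z.im ∈ Set.Ioo (0:ℝ) 1}

/-- The set `S + Λ` of all translates of points of `S` by lattice points. -/
def SLat (S : Finset ℂ) : Set ℂ := {z : ℂ | ∃ s ∈ S, ∃ p : ℤ × ℤ, z = s + latPt p}

@[simp] lemma latPt_re (p : ℤ × ℤ) : (latPt p).re = p.1 := by simp [latPt]
@[simp] lemma latPt_im (p : ℤ × ℤ) : (latPt p).im = p.2 := by simp [latPt]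

lemma latPt_neg (p : ℤ × ℤ) : latPt (-p) = - latPt p := by
  simp [latPt]; ring

lemma QSet_unique {z : ℂ} {p q : ℤ × ℤ} (hp : z - latPt p ∈ QSet)
    (hq : z - latPt q ∈ QSet) : p = q := by
  obtain ⟨⟨hp1, hp2⟩, hp3, hp4⟩ := hp
  obtain ⟨⟨hq1, hq2⟩, hq3, hq4⟩ := hq
  simp only [Complex.sub_re, Complex.sub_im, latPt_re, latPt_im] at *
  have key : ∀ a b : ℤ, |(a : ℝ) - b| < 1 → a = b := by
    intro a b h
    have h2 : ((|a - b| : ℤ) : ℝ) < 1 := by push_cast; exact h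
    have h3 : |a - b| < 1 := by exact_mod_cast h2
    have := Int.abs_lt_one_iff.mp h3
    omega
  have h1 : p.1 = q.1 := key _ _ (by rw [abs_sub_lt_iff]; constructor <;> linarith)
  have h2 : p.2 = q.2 := key _ _ (by rw [abs_sub_lt_iff]; constructor <;> linarith)
  exact Prod.ext h1 h2

lemma QSet_open : IsOpen QSet := by
  have : QSet = Complex.re ⁻¹' Set.Ioo 0 1 ∩ Complex.im ⁻¹' Set.Ioo 0 1 := rfl
  rw [this]
  exact (isOpen_Ioo.preimage Complex.continuous_re).inter (isOpen_Ioo.preimage Complex.continuous_im)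

lemma closure_QSet_subset : closure QSet ⊆ {z : ℂ | z.re ∈ Set.Icc (0:ℝ) 1 ∧ z.im ∈ Set.Icc (0:ℝ) 1} := by
  apply closure_minimal
  · intro z hz; exact ⟨⟨hz.1.1.le, hz.1.2.le⟩, hz.2.1.le, hz.2.2.le⟩
  · have : {z : ℂ | z.re ∈ Set.Icc (0:ℝ) 1 ∧ z.im ∈ Set.Icc (0:ℝ) 1}
        = Complex.re ⁻¹' Set.Icc 0 1 ∩ Complex.im ⁻¹' Set.Icc 0 1 := rfl
    rw [this]
    exact (isClosed_Icc.preimage Complex.continuous_re).inter (isClosed_Icc.preimage Complex.continuous_im)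

lemma int_rpow_summable {e : ℝ} (he : 1 < e) :
    Summable (fun k : ℤ => (max 1 |(k:ℝ)|) ^ (-e)) := by
  have hind : Summable (fun k : ℤ => Set.indicator {(0:ℤ)} (fun _ => (1:ℝ)) k) := by
    apply summable_of_ne_finset_zero (s := {(0:ℤ)})
    intro k hk
    simp only [Set.indicator_apply, Set.mem_singleton_iff]
    rw [if_neg (by simpa using hk)]
  refine Summable.of_nonneg_of_le (fun k => Real.rpow_nonneg (by positivity) _)
    (fun k => ?_) ((Real.summable_abs_int_rpow he).add hind)
  rcases eq_or_ne k 0 with rfl | hk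
  · simp [Real.zero_rpow (by linarith : -e ≠ 0), Real.one_rpow]
  · have h1 : (1:ℝ) ≤ |(k:ℝ)| := by
      have : (1:ℤ) ≤ |k| := Int.one_le_abs (by exact_mod_cast hk)
      calc (1:ℝ) ≤ ((|k| : ℤ) : ℝ) := by exact_mod_cast this
      _ = |(k:ℝ)| := by push_cast; ring
    rw [max_eq_right h1]
    have : Set.indicator {(0:ℤ)} (fun _ => (1:ℝ)) k = 0 := by
      simp [Set.indicator_apply, hk]
    rw [this, add_zero]

lemma rpow_base_anti {e x y : ℝ} (he : 0 < e) (hx : 0 < x) (hxy : x ≤ y) :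
    y ^ (-e) ≤ x ^ (-e) := by
  rw [Real.rpow_neg hx.le, Real.rpow_neg (by linarith)]
  exact inv_anti₀ (Real.rpow_pos_of_pos hx _) (Real.rpow_le_rpow hx.le hxy he.le)

lemma lattice_decay_bound {b : ℝ} (hb : 2 < b) :
    ∃ C : ℝ, 0 ≤ C ∧ ∀ z : ℂ,
      Summable (fun p : ℤ × ℤ => (1 + ‖z - latPt p‖) ^ (-b)) ∧
      (∑' p : ℤ × ℤ, (1 + ‖z - latPt p‖) ^ (-b)) ≤ C := by
  have he : 1 < b/2 := by linarith
  have hepos : 0 < b/2 := by linarith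
  have hg := int_rpow_summable he
  have hNle : ∀ q : ℤ × ℤ, (max 1 (max |(q.1:ℝ)| |(q.2:ℝ)|)) ^ (-b)
      ≤ (max 1 |(q.1:ℝ)|) ^ (-(b/2)) * (max 1 |(q.2:ℝ)|) ^ (-(b/2)) := by
    intro q
    set N : ℝ := max 1 (max |(q.1:ℝ)| |(q.2:ℝ)|) with hN
    have hNpos : 0 < N := lt_of_lt_of_le one_pos (le_max_left _ _)
    have hx1 : (0:ℝ) < max 1 |(q.1:ℝ)| := lt_of_lt_of_le one_pos (le_max_left _ _)
    have hx2 : (0:ℝ) < max 1 |(q.2:ℝ)| := lt_of_lt_of_le one_pos (le_max_left _ _)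
    have h1N : max 1 |(q.1:ℝ)| ≤ N :=
      max_le (le_max_left _ _) (le_trans (le_max_left _ _) (le_max_right _ _))
    have h2N : max 1 |(q.2:ℝ)| ≤ N :=
      max_le (le_max_left _ _) (le_trans (le_max_right _ _) (le_max_right _ _))
    have : N ^ (-b) = N ^ (-(b/2)) * N ^ (-(b/2)) := by
      rw [← Real.rpow_add hNpos]; ring_nf
    rw [this]
    exact mul_le_mul (rpow_base_anti hepos hx1 h1N) (rpow_base_anti hepos hx2 h2N)
      (Real.rpow_nonneg hNpos.le _) (Real.rpow_nonneg hx1.le _)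
  have hN : Summable (fun q : ℤ × ℤ => (max 1 (max |(q.1:ℝ)| |(q.2:ℝ)|)) ^ (-b)) := by
    apply Summable.of_nonneg_of_le (fun q => Real.rpow_nonneg (by positivity) _) hNle
    exact hg.mul_of_nonneg hg (fun _ => Real.rpow_nonneg (by positivity) _)
      (fun _ => Real.rpow_nonneg (by positivity) _)
  refine ⟨∑' q : ℤ × ℤ, (max 1 (max |(q.1:ℝ)| |(q.2:ℝ)|)) ^ (-b),
    tsum_nonneg (fun q => Real.rpow_nonneg (by positivity) _), fun z => ?_⟩
  set n : ℤ × ℤ := (round z.re, round z.im) with hn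
  have key : ∀ q : ℤ × ℤ, (1 + ‖z - latPt (q + n)‖) ^ (-b)
      ≤ (max 1 (max |(q.1:ℝ)| |(q.2:ℝ)|)) ^ (-b) := by
    intro q
    apply rpow_base_anti (by linarith) (lt_of_lt_of_le one_pos (le_max_left _ _))
    have hre : (z - latPt (q + n)).re = z.re - ((q.1:ℝ) + n.1) := by
      simp only [Complex.sub_re, latPt_re, Prod.fst_add]; push_cast; ring
    have him : (z - latPt (q + n)).im = z.im - ((q.2:ℝ) + n.2) := by
      simp only [Complex.sub_im, latPt_im, Prod.snd_add]; push_cast; ring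
    have h1 : |z.re - ((q.1:ℝ) + n.1)| ≤ ‖z - latPt (q + n)‖ := by
      rw [← hre]; exact Complex.abs_re_le_norm _
    have h2 : |z.im - ((q.2:ℝ) + n.2)| ≤ ‖z - latPt (q + n)‖ := by
      rw [← him]; exact Complex.abs_im_le_norm _
    have hr1 : |z.re - ((n.1:ℤ):ℝ)| ≤ 1/2 := abs_sub_round z.re
    have hr2 : |z.im - ((n.2:ℤ):ℝ)| ≤ 1/2 := abs_sub_round z.im
    have h4 : |(q.1:ℝ)| ≤ |z.re - ((n.1:ℤ):ℝ)| + |z.re - ((q.1:ℝ) + n.1)| := by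
      have e1 : (q.1:ℝ) = (z.re - ((n.1:ℤ):ℝ)) - (z.re - ((q.1:ℝ) + (n.1:ℝ))) := by ring
      calc |(q.1:ℝ)| = |(z.re - ((n.1:ℤ):ℝ)) - (z.re - ((q.1:ℝ) + (n.1:ℝ)))| := by rw [← e1]
      _ ≤ _ := abs_sub _ _
    have h5 : |(q.2:ℝ)| ≤ |z.im - ((n.2:ℤ):ℝ)| + |z.im - ((q.2:ℝ) + n.2)| := by
      have e1 : (q.2:ℝ) = (z.im - ((n.2:ℤ):ℝ)) - (z.im - ((q.2:ℝ) + (n.2:ℝ))) := by ring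
      calc |(q.2:ℝ)| = |(z.im - ((n.2:ℤ):ℝ)) - (z.im - ((q.2:ℝ) + (n.2:ℝ)))| := by rw [← e1]
      _ ≤ _ := abs_sub _ _
    have habs : 0 ≤ ‖z - latPt (q + n)‖ := norm_nonneg _
    apply max_le (by linarith)
    exact max_le (by linarith) (by linarith)
  set g : ℤ × ℤ → ℝ := fun p => (1 + ‖z - latPt p‖) ^ (-b) with hgdef
  have hgnn : ∀ p, 0 ≤ g p := fun p => Real.rpow_nonneg (by positivity) _
  have hcomp : Summable (g ∘ (Equiv.addRight n)) := by
    apply Summable.of_nonneg_of_le (fun q => hgnn _) _ hN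
    intro q
    exact key q
  have hsummg : Summable g := (Equiv.summable_iff (Equiv.addRight n)).mp hcomp
  refine ⟨hsummg, ?_⟩
  have := Equiv.tsum_eq (Equiv.addRight n) g
  rw [← this]
  exact Summable.tsum_le_tsum (fun q => key q) hcomp hN

set_option maxHeartbeats 1000000 in
/-- `‖f·Ψ_ρ - f‖²_{L²(Ω)} → 0` as `ρ → 0⁺` for every `f ∈ L²(Ω)`. -/
theorem stmt4
    (Ω : Set ℂ) (hΩopen : IsOpen Ω) (hΩne : Ω.Nonempty)
    (hper : ∀ z ∈ Ω, ∀ p : ℤ × ℤ, z + latPt p ∈ Ω)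
    (S : Finset ℂ) (hSQ : (S : Set ℂ) ⊆ QSet)
    (ϕ : ℂ → ℂ) (hmero : MeromorphicOn ϕ Set.univ)
    (hana : AnalyticOnNhd ℂ ϕ ((S : Set ℂ)ᶜ))
    (b d : ℝ) (hb : 2 < b) (hd : 0 ≤ d)
    (hdecay : ∀ z ∈ Ω, z ∉ closure QSet →
      (1 + ‖z‖) ^ b * ‖ϕ z‖ ≤ d)
    (hsum : ∀ z ∈ Ω \ SLat S,
      Summable (fun p : ℤ × ℤ => ‖ϕ (z - latPt p)‖))
    (hnz : ∀ z ∈ closure Ω \ SLat S, (∑' p : ℤ × ℤ, ϕ (z - latPt p)) ≠ 0)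
    (hlb : ∃ c > (0:ℝ), ∀ z ∈ Ω \ SLat S,
      c ≤ ‖∑' p : ℤ × ℤ, ϕ (z - latPt p)‖)
    (Ψ : ℝ → ℂ → ℂ)
    (hΨana : ∀ ρ ∈ Set.Ioc (0:ℝ) 1, AnalyticOnNhd ℂ (Ψ ρ) Ω)
    (hΨeq : ∀ ρ ∈ Set.Ioc (0:ℝ) 1, ∀ z ∈ Ω \ SLat S,
      Ψ ρ z = (∑' p : ℤ × ℤ,
          (Complex.ofReal ((2:ℝ) ^ (-(ρ * ‖latPt p‖)))) * ϕ (z - latPt p)) /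
        (∑' p : ℤ × ℤ, ϕ (z - latPt p)))
    (f : ℂ → ℂ) (hf : MemLp f 2 (volume.restrict Ω)) :
    Filter.Tendsto (fun ρ : ℝ => ∫ z in Ω, ‖f z * Ψ ρ z - f z‖ ^ 2)
      (nhdsWithin 0 (Set.Ioi 0)) (nhds 0) := by
  obtain ⟨c, hc, hφlb⟩ := hlb
  obtain ⟨C, hC0, hC⟩ := lattice_decay_bound hb
  -- notation
  set term : ℂ → ℤ × ℤ → ℝ := fun z p => ‖ϕ (z - latPt p)‖ with hterm_def
  set φ : ℂ → ℂ := fun z => ∑' p : ℤ × ℤ, ϕ (z - latPt p) with hφ_def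
  -- translates stay in Ω
  have htrans : ∀ z ∈ Ω, ∀ p : ℤ × ℤ, z - latPt p ∈ Ω := by
    intro z hz p
    have := hper z hz (-p)
    rwa [latPt_neg, ← sub_eq_add_neg] at this
  -- δ such that balls around S lie in QSet
  obtain ⟨δ, hδpos, hδQ⟩ : ∃ δ > 0, ∀ s ∈ S, Metric.ball s δ ⊆ QSet := by
    obtain ⟨δ, hδpos, hδsub⟩ := ((S : Set ℂ).toFinite.isCompact).exists_cthickening_subset_open
      QSet_open hSQ
    refine ⟨δ, hδpos, fun s hs => ?_⟩
    intro w hw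
    apply hδsub
    exact ((Metric.ball_subset_thickening hs δ).trans
      (Metric.thickening_subset_cthickening δ _)) hw
  -- sup bound K on the compact regular part of the closed unit square
  obtain ⟨K, hK0, hK⟩ : ∃ K, 0 ≤ K ∧ ∀ w ∈ closure QSet,
      (∀ s ∈ S, δ ≤ dist w s) → ‖ϕ w‖ ≤ K := by
    set Cs : Set ℂ := closure QSet ∩ {w : ℂ | ∀ s ∈ S, δ ≤ dist w s} with hCs_def
    have hCsub : Cs ⊆ Metric.closedBall 0 2 := by
      intro w hw
      have h1 := closure_QSet_subset hw.1
      rw [Metric.mem_closedBall, dist_zero_right]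
      calc ‖w‖ ≤ |w.re| + |w.im| := Complex.norm_le_abs_re_add_abs_im w
      _ ≤ 2 := by
        obtain ⟨⟨h2, h3⟩, h4, h5⟩ := h1
        rw [_root_.abs_of_nonneg h2, _root_.abs_of_nonneg h4]; linarith
    have hCclosed : IsClosed Cs := by
      have : Cs = closure QSet ∩ ⋂ s ∈ S, {w : ℂ | δ ≤ dist w s} := by
        ext w; simp [hCs_def]
      rw [this]
      exact isClosed_closure.inter (isClosed_biInter fun s _ =>
        isClosed_le continuous_const (continuous_id.dist continuous_const))
    have hCcompact : IsCompact Cs :=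
      (isCompact_closedBall (0:ℂ) 2).of_isClosed_subset hCclosed hCsub
    have hCS : Cs ⊆ ((S : Set ℂ))ᶜ := by
      intro w hw hwS
      have := hw.2 w hwS
      rw [dist_self] at this
      linarith
    have hcont : ContinuousOn ϕ Cs := (hana.mono hCS).continuousOn
    obtain ⟨K, hKb⟩ := hCcompact.exists_bound_of_continuousOn hcont
    refine ⟨max K 0, le_max_right _ _, fun w hw1 hw2 => ?_⟩
    have := hKb w ⟨hw1, hw2⟩
    exact this.trans (le_max_left _ _)
  -- the finitely many lattice points that can put z in the closed unit square
  set Fz : ℂ → Finset (ℤ × ℤ) := fun z =>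
    Finset.Icc (⌊z.re⌋ - 1) ⌊z.re⌋ ×ˢ Finset.Icc (⌊z.im⌋ - 1) ⌊z.im⌋ with hFz_def
  have hFz_mem : ∀ z : ℂ, ∀ p : ℤ × ℤ, z - latPt p ∈ closure QSet → p ∈ Fz z := by
    intro z p hp
    obtain ⟨⟨h1, h2⟩, h3, h4⟩ := closure_QSet_subset hp
    simp only [Complex.sub_re, Complex.sub_im, latPt_re, latPt_im] at h1 h2 h3 h4
    simp only [hFz_def, Finset.mem_product, Finset.mem_Icc]
    constructor
    · constructor
      · have : ((⌊z.re⌋ - 1 : ℤ) : ℝ) ≤ (p.1 : ℝ) := by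
          push_cast
          have := Int.floor_le z.re
          linarith
        exact_mod_cast this
      · exact Int.le_floor.mpr (by linarith)
    · constructor
      · have : ((⌊z.im⌋ - 1 : ℤ) : ℝ) ≤ (p.2 : ℝ) := by
          push_cast
          have := Int.floor_le z.im
          linarith
        exact_mod_cast this
      · exact Int.le_floor.mpr (by linarith)
  have hFz_card : ∀ z : ℂ, (Fz z).card = 4 := by
    intro z
    simp only [hFz_def, Finset.card_product, Int.card_Icc]
    norm_num
    rfl
  -- the dominating function h
  set h : ℂ → ℤ × ℤ → ℝ := fun z p =>
    (if p ∈ Fz z then K else 0) + d * (1 + ‖z - latPt p‖) ^ (-b) with hh_def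
  have hh_nonneg : ∀ z p, 0 ≤ h z p := by
    intro z p
    have := Real.rpow_nonneg (by positivity : (0:ℝ) ≤ 1 + ‖z - latPt p‖) (-b)
    have : 0 ≤ d * (1 + ‖z - latPt p‖) ^ (-b) := by positivity
    simp only [hh_def]
    split <;> [linarith [hK0]; linarith]
  have hh_sum : ∀ z : ℂ, Summable (h z) := by
    intro z
    apply Summable.add
    · exact summable_of_ne_finset_zero (s := Fz z) (fun p hp => if_neg hp)
    · exact ((hC z).1.mul_left d)
  have hh_tsum : ∀ z : ℂ, ∑' p, h z p ≤ 4 * K + d * C := by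
    intro z
    have h1 : Summable (fun p : ℤ × ℤ => if p ∈ Fz z then K else 0) :=
      summable_of_ne_finset_zero (s := Fz z) (fun p hp => if_neg hp)
    have h2 : Summable (fun p : ℤ × ℤ => d * (1 + ‖z - latPt p‖) ^ (-b)) :=
      (hC z).1.mul_left d
    rw [hh_def, Summable.tsum_add h1 h2]
    have e1 : ∑' p : ℤ × ℤ, (if p ∈ Fz z then K else 0) = 4 * K := by
      rw [tsum_eq_sum (s := Fz z) (fun p hp => if_neg hp)]
      rw [Finset.sum_ite_mem, Finset.inter_self, Finset.sum_const, hFz_card z,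
        nsmul_eq_mul]
      norm_num
    rw [e1, tsum_mul_left]
    have := (hC z).2
    have hd' : d * (∑' p : ℤ × ℤ, (1 + ‖z - latPt p‖) ^ (-b)) ≤ d * C :=
      mul_le_mul_of_nonneg_left this hd
    linarith
  -- each regular term is bounded by h
  have hterm_le : ∀ z ∈ Ω, ∀ p : ℤ × ℤ,
      (∀ s ∈ S, δ ≤ dist (z - latPt p) s) → term z p ≤ h z p := by
    intro z hz p hreg
    by_cases hcl : z - latPt p ∈ closure QSet
    · have := hK _ hcl hreg
      simp only [hh_def, hterm_def, if_pos (hFz_mem z p hcl)]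
      have hnn : 0 ≤ d * (1 + ‖z - latPt p‖) ^ (-b) := by positivity
      linarith
    · have hzΩ : z - latPt p ∈ Ω := htrans z hz p
      have hdec := hdecay _ hzΩ hcl
      have hpos : (0:ℝ) < 1 + ‖z - latPt p‖ := by positivity
      have hbpos : (0:ℝ) < (1 + ‖z - latPt p‖) ^ b := Real.rpow_pos_of_pos hpos b
      have hterm2 : ‖ϕ (z - latPt p)‖ ≤ d * (1 + ‖z - latPt p‖) ^ (-b) := by
        rw [Real.rpow_neg hpos.le, ← div_eq_mul_inv, le_div_iff₀ hbpos]
        rw [mul_comm] at hdec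
        linarith
      simp only [hh_def, hterm_def]
      have hif : (0:ℝ) ≤ if p ∈ Fz z then K else 0 := by
        split
        · exact hK0
        · exact le_refl 0
      linarith
  -- key bound: the absolute sum is controlled by A + |φ z|
  set A : ℝ := 2 * (4 * K + d * C) with hA_def
  have hA0 : 0 ≤ A := by positivity
  have hkey : ∀ z ∈ Ω \ SLat S, ∑' p, term z p ≤ A + ‖φ z‖ := by
    intro z hz
    have hsz : Summable (term z) := hsum z hz
    have habsφ : 0 ≤ ‖φ z‖ := norm_nonneg _
    by_cases hsing : ∃ p0 : ℤ × ℤ, ∃ s ∈ S, dist (z - latPt p0) s < δ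
    · obtain ⟨p0, s0, hs0, hd0⟩ := hsing
      have huniq : ∀ p : ℤ × ℤ, p ≠ p0 → ∀ s ∈ S, δ ≤ dist (z - latPt p) s := by
        intro p hp s hs
        by_contra hlt
        push_neg at hlt
        have h1 : z - latPt p ∈ QSet := hδQ s hs (Metric.mem_ball.mpr hlt)
        have h2 : z - latPt p0 ∈ QSet := hδQ s0 hs0 (Metric.mem_ball.mpr hd0)
        exact hp (QSet_unique h1 h2)
      have hrem_le : ∀ p, (if p = p0 then 0 else term z p) ≤ h z p := by
        intro p
        by_cases hp : p = p0
        · rw [if_pos hp]; exact hh_nonneg z p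
        · rw [if_neg hp]; exact hterm_le z hz.1 p (huniq p hp)
      have hrem_nonneg : ∀ p : ℤ × ℤ, 0 ≤ (if p = p0 then 0 else term z p) := by
        intro p
        split
        · exact le_refl 0
        · exact norm_nonneg _
      have hremsum : Summable (fun p : ℤ × ℤ => if p = p0 then 0 else term z p) :=
        Summable.of_nonneg_of_le hrem_nonneg hrem_le (hh_sum z)
      have hrem_tsum : ∑' p, (if p = p0 then 0 else term z p) ≤ 4 * K + d * C :=
        (Summable.tsum_le_tsum hrem_le hremsum (hh_sum z)).trans (hh_tsum z)
      have hsumϕ : Summable (fun p : ℤ × ℤ => ϕ (z - latPt p)) := by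
        apply Summable.of_norm
        exact hsz
      have hsplitϕ : φ z = ϕ (z - latPt p0) + ∑' p, (if p = p0 then 0 else ϕ (z - latPt p)) :=
        Summable.tsum_eq_add_tsum_ite hsumϕ p0
      have hremϕ_sum : Summable (fun p : ℤ × ℤ => ‖if p = p0 then 0 else ϕ (z - latPt p)‖) := by
        apply hremsum.congr
        intro p
        split
        · simp
        · simp [hterm_def]
      have hp0 : term z p0 ≤ ‖φ z‖ + ∑' p, (if p = p0 then 0 else term z p) := by
        have heq : ϕ (z - latPt p0) = φ z - ∑' p, (if p = p0 then 0 else ϕ (z - latPt p)) := by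
          rw [hsplitϕ]; ring
        have h1 : ‖ϕ (z - latPt p0)‖ ≤ ‖φ z‖
            + ‖∑' p, (if p = p0 then 0 else ϕ (z - latPt p))‖ := by
          rw [heq]
          exact norm_sub_le _ _
        have h2 : ‖∑' p, (if p = p0 then 0 else ϕ (z - latPt p))‖
            ≤ ∑' p, (if p = p0 then 0 else term z p) := by
          refine (norm_tsum_le_tsum_norm hremϕ_sum).trans ?_
          apply le_of_eq
          apply tsum_congr
          intro p
          split
          · simp
          · simp [hterm_def]
        calc term z p0 = ‖ϕ (z - latPt p0)‖ := rfl
        _ ≤ _ := h1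
        _ ≤ _ := by linarith
      have hsplit : ∑' p, term z p = term z p0 + ∑' p, (if p = p0 then 0 else term z p) :=
        Summable.tsum_eq_add_tsum_ite hsz p0
      rw [hsplit, hA_def]
      linarith
    · push_neg at hsing
      have hle : ∀ p, term z p ≤ h z p := by
        intro p
        exact hterm_le z hz.1 p (fun s hs => hsing p s hs)
      have := (Summable.tsum_le_tsum hle hsz (hh_sum z)).trans (hh_tsum z)
      rw [hA_def]
      linarith
  -- uniform bound on Ψ
  set M : ℝ := A / c + 1 with hM_def
  have hM0 : 0 ≤ M := by positivity
  have hΨbd : ∀ ρ ∈ Set.Ioc (0:ℝ) 1, ∀ z ∈ Ω \ SLat S, ‖Ψ ρ z‖ ≤ M := by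
    intro ρ hρ z hz
    rw [hΨeq ρ hρ z hz]
    have hden : c ≤ ‖φ z‖ := hφlb z hz
    have hdenpos : 0 < ‖φ z‖ := lt_of_lt_of_le hc hden
    have hwle : ∀ p : ℤ × ℤ,
        ‖(Complex.ofReal ((2:ℝ) ^ (-(ρ * ‖latPt p‖)))) * ϕ (z - latPt p)‖
          ≤ term z p := by
      intro p
      rw [norm_mul, Complex.norm_real, Real.norm_eq_abs,
        _root_.abs_of_nonneg (Real.rpow_nonneg (by norm_num) _)]
      have h1 : (2:ℝ) ^ (-(ρ * ‖latPt p‖)) ≤ 1 := by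
        apply Real.rpow_le_one_of_one_le_of_nonpos one_le_two
        have : 0 ≤ ρ * ‖latPt p‖ := mul_nonneg hρ.1.le (norm_nonneg _)
        linarith
      calc _ ≤ 1 * ‖ϕ (z - latPt p)‖ :=
        mul_le_mul_of_nonneg_right h1 (norm_nonneg _)
      _ = term z p := by rw [one_mul]
    have hwsum : Summable (fun p : ℤ × ℤ =>
        ‖(Complex.ofReal ((2:ℝ) ^ (-(ρ * ‖latPt p‖)))) * ϕ (z - latPt p)‖) :=
      Summable.of_nonneg_of_le (fun p => norm_nonneg _) hwle (hsum z hz)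
    have h1 : ‖∑' p : ℤ × ℤ,
        (Complex.ofReal ((2:ℝ) ^ (-(ρ * ‖latPt p‖)))) * ϕ (z - latPt p)‖
          ≤ ∑' p, term z p := by
      exact (norm_tsum_le_tsum_norm hwsum).trans (Summable.tsum_le_tsum hwle hwsum (hsum z hz))
    rw [norm_div]
    rw [div_le_iff₀ hdenpos]
    have h2 : A / c * c ≤ A / c * ‖φ z‖ :=
      mul_le_mul_of_nonneg_left hden (by positivity)
    rw [div_mul_cancel₀ A (ne_of_gt hc)] at h2
    have h3 := hkey z hz
    have h4 : M * ‖φ z‖ = A / c * ‖φ z‖ + ‖φ z‖ := by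
      rw [hM_def]; ring
    rw [h4]
    calc ‖_‖ ≤ ∑' p, term z p := h1
    _ ≤ A + ‖φ z‖ := h3
    _ ≤ _ := by linarith
  -- pointwise convergence of Ψ to 1
  have hIoc : Set.Ioc (0:ℝ) 1 ∈ nhdsWithin (0:ℝ) (Set.Ioi 0) :=
    Ioc_mem_nhdsGT_of_mem ⟨le_refl 0, one_pos⟩
  have hΨlim : ∀ z ∈ Ω \ SLat S,
      Tendsto (fun ρ : ℝ => Ψ ρ z) (nhdsWithin 0 (Set.Ioi 0)) (nhds 1) := by
    intro z hz
    have hden_ne : φ z ≠ 0 := by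
      intro h0
      have h5 : c ≤ ‖φ z‖ := hφlb z hz
      rw [h0] at h5
      simp only [norm_zero] at h5
      linarith
    have hnum : Tendsto (fun ρ : ℝ => ∑' p : ℤ × ℤ,
        (Complex.ofReal ((2:ℝ) ^ (-(ρ * ‖latPt p‖)))) * ϕ (z - latPt p))
        (nhdsWithin 0 (Set.Ioi 0)) (nhds (φ z)) := by
      have := tendsto_tsum_of_dominated_convergence
        (𝓕 := nhdsWithin (0:ℝ) (Set.Ioi 0))
        (f := fun ρ p => (Complex.ofReal ((2:ℝ) ^ (-(ρ * ‖latPt p‖)))) * ϕ (z - latPt p))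
        (g := fun p : ℤ × ℤ => ϕ (z - latPt p))
        (bound := term z) (hsum z hz) ?_ ?_
      · exact this
      · intro p
        have hc1 : Tendsto (fun ρ : ℝ => -(ρ * ‖latPt p‖)) (nhds 0)
            (nhds 0) := by
          have : Continuous (fun ρ : ℝ => -(ρ * ‖latPt p‖)) :=
            (continuous_id.mul continuous_const).neg
          have h0 := this.tendsto 0
          simpa using h0
        have hc2 : Tendsto (fun ρ : ℝ => (2:ℝ) ^ (-(ρ * ‖latPt p‖)))
            (nhds 0) (nhds 1) := by
          have hcont : ContinuousAt (fun x : ℝ => (2:ℝ) ^ x) 0 :=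
            Real.continuousAt_const_rpow (by norm_num)
          have := hcont.tendsto.comp hc1
          simpa [Real.rpow_zero, Function.comp_def] using this
        have hc3 : Tendsto (fun ρ : ℝ =>
            (Complex.ofReal ((2:ℝ) ^ (-(ρ * ‖latPt p‖))))) (nhds 0)
            (nhds 1) := by
          have := (Complex.continuous_ofReal.tendsto 1).comp hc2
          simpa [Function.comp_def] using this
        have := hc3.mul_const (ϕ (z - latPt p))
        rw [one_mul] at this
        exact this.mono_left nhdsWithin_le_nhds
      · filter_upwards [self_mem_nhdsWithin] with ρ hρ
        intro p
        rw [norm_mul, Complex.norm_real, Real.norm_eq_abs,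
          _root_.abs_of_nonneg (Real.rpow_nonneg (by norm_num) _)]
        have h1 : (2:ℝ) ^ (-(ρ * ‖latPt p‖)) ≤ 1 := by
          apply Real.rpow_le_one_of_one_le_of_nonpos one_le_two
          have hρ' : (0:ℝ) < ρ := hρ
          have : 0 ≤ ρ * ‖latPt p‖ := mul_nonneg hρ'.le (norm_nonneg _)
          linarith
        calc _ ≤ 1 * ‖ϕ (z - latPt p)‖ :=
          mul_le_mul_of_nonneg_right h1 (norm_nonneg _)
        _ = term z p := by rw [one_mul]
    have hev : ∀ᶠ ρ in nhdsWithin (0:ℝ) (Set.Ioi 0), (fun ρ : ℝ => (∑' p : ℤ × ℤ,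
        (Complex.ofReal ((2:ℝ) ^ (-(ρ * ‖latPt p‖)))) * ϕ (z - latPt p)) / φ z) ρ
          = Ψ ρ z := by
      filter_upwards [hIoc] with ρ hρ
      exact (hΨeq ρ hρ z hz).symm
    have hdiv := hnum.div_const (φ z)
    rw [div_self hden_ne] at hdiv
    exact hdiv.congr' hev
  -- null set
  have hnull : volume (SLat S) = 0 := by
    have hcnt : (SLat S).Countable := by
      have : SLat S = ⋃ s ∈ (S : Set ℂ), Set.range (fun p : ℤ × ℤ => s + latPt p) := by
        ext w
        simp only [SLat, Set.mem_setOf_eq, Set.mem_iUnion, Set.mem_range]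
        constructor
        · rintro ⟨s, hs, p, rfl⟩; exact ⟨s, hs, p, rfl⟩
        · rintro ⟨s, hs, p, rfl⟩; exact ⟨s, hs, p, rfl⟩
      rw [this]
      exact Set.Countable.biUnion S.countable_toSet (fun s _ => Set.countable_range _)
    exact hcnt.measure_zero _
  have hae : ∀ᵐ z ∂(volume.restrict Ω), z ∈ Ω \ SLat S := by
    have h1 : ∀ᵐ z ∂(volume.restrict Ω), z ∈ Ω := ae_restrict_mem hΩopen.measurableSet
    have h2 : ∀ᵐ z ∂(volume.restrict Ω), z ∉ SLat S := by
      have hz0 : (volume.restrict Ω) (SLat S) = 0 :=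
        le_antisymm ((Measure.restrict_apply_le _ _).trans hnull.le) (by simp)
      rw [MeasureTheory.ae_iff]
      simpa using hz0
    filter_upwards [h1, h2] with z hz1 hz2
    exact ⟨hz1, hz2⟩
  -- dominated convergence
  have hbd_int : Integrable (fun z => (M + 1) ^ 2 * ‖f z‖ ^ 2)
      (volume.restrict Ω) := by
    have h2 := hf.integrable_norm_rpow two_ne_zero ENNReal.ofNat_ne_top
    have heq : (fun z => ‖f z‖ ^ (2:ENNReal).toReal) = fun z => ‖f z‖ ^ 2 := by
      funext z
      rw [ENNReal.toReal_ofNat, show ((2:ℝ)) = ((2:ℕ):ℝ) by norm_num,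
        Real.rpow_natCast]
    rw [heq] at h2
    exact h2.const_mul _
  have key := MeasureTheory.tendsto_integral_filter_of_dominated_convergence
    (μ := volume.restrict Ω) (l := nhdsWithin (0:ℝ) (Set.Ioi 0))
    (F := fun ρ z => (‖f z * Ψ ρ z - f z‖ ^ 2 : ℝ))
    (f := fun _ => (0:ℝ))
    (bound := fun z => (M + 1) ^ 2 * ‖f z‖ ^ 2) ?_ ?_ hbd_int ?_
  · simpa using key
  · -- measurability
    filter_upwards [hIoc] with ρ hρ
    have hfm : AEStronglyMeasurable f (volume.restrict Ω) := hf.aestronglyMeasurable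
    have hΨm : AEStronglyMeasurable (Ψ ρ) (volume.restrict Ω) :=
      ((hΨana ρ hρ).continuousOn).aestronglyMeasurable hΩopen.measurableSet
    have hgm : AEStronglyMeasurable (fun z => f z * Ψ ρ z - f z) (volume.restrict Ω) :=
      (hfm.mul hΨm).sub hfm
    have hnm := hgm.norm
    have := hnm.mul hnm
    apply this.congr
    filter_upwards with z
    simp only [Pi.mul_apply, pow_two]
  · -- bound
    filter_upwards [hIoc] with ρ hρ
    rw [MeasureTheory.ae_restrict_iff' hΩopen.measurableSet] at hae ⊢
    filter_upwards [hae] with z hz hzΩ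
    have hz' := hz hzΩ
    have hΨb := hΨbd ρ hρ z hz'
    have h1 : ‖f z * Ψ ρ z - f z‖ ≤ ‖f z‖ * (M + 1) := by
      have : f z * Ψ ρ z - f z = f z * (Ψ ρ z - 1) := by ring
      rw [this, norm_mul]
      apply mul_le_mul_of_nonneg_left _ (norm_nonneg _)
      calc ‖Ψ ρ z - 1‖ ≤ ‖Ψ ρ z‖ + ‖(1:ℂ)‖ := by
            exact norm_sub_le _ _
      _ ≤ M + 1 := by simp only [norm_one]; linarith
    have h2 : 0 ≤ ‖f z * Ψ ρ z - f z‖ := norm_nonneg _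
    rw [Real.norm_of_nonneg (by positivity)]
    calc ‖f z * Ψ ρ z - f z‖ ^ 2 ≤ (‖f z‖ * (M + 1)) ^ 2 := by
          apply pow_le_pow_left₀ h2 h1
    _ = (M + 1) ^ 2 * ‖f z‖ ^ 2 := by ring
  · -- pointwise limit
    rw [MeasureTheory.ae_restrict_iff' hΩopen.measurableSet] at hae ⊢
    filter_upwards [hae] with z hz hzΩ
    have hz' := hz hzΩ
    have hlim := hΨlim z hz'
    have hcont : ContinuousAt (fun w : ℂ => (‖f z * w - f z‖ ^ 2 : ℝ)) 1 := by
      apply ContinuousAt.pow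
      apply Continuous.continuousAt
      exact (continuous_norm.comp ((continuous_const.mul continuous_id).sub
        continuous_const))
    have := hcont.tendsto.comp hlim
    simpa [Function.comp_def] using this
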